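/- Lemma 1 (optimal per-epoch structure, time-invariant channel): Suppose (r*, l*) is a global minimizer of the energy E(r, l) over the set of feasible schedules. Then every epoch n ∈ {1, …, N} uses one of three strategies: (i) 'off': l*_n = 0; (ii) 'on-off': r*_n = r_ee and 0 < l*_n ≤ L_n; or (iii) 'on': r*_n > r_ee and l*_n = L_n. Equivalently: for every n with l*_n > 0 one has r*_n ≥ r_ee, and for every n with l*_n > 0 and r*_n > r_ee one has l*_n = L_n. -/

import Mathlib

open Real Finset

/-- Transmit-power function `P(r) = (e^r - 1)/g` for channel power gain `g`. -/
noncomputable def P (g r : ℝ) : ℝ := (Real.exp r - 1) / g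

/-- Energy-efficiency (energy-per-bit) ratio `ξ(r) = (P(r) + ρ)/r`. -/
noncomputable def xi (g ρ r : ℝ) : ℝ := (P g r + ρ) / r

lemma xi_mono_aux (g ρ : ℝ) (hg : 0 < g) (x y z : ℝ) (hx : 0 < x) (hxy : x < y) (hyz : y < z)
    (hxz : xi g ρ x < xi g ρ z) : xi g ρ y < xi g ρ z := by
  by_contra hcon
  push_neg at hcon
  have hy : 0 < y := hx.trans hxy
  have hz : 0 < z := hy.trans hyz
  set c := xi g ρ y with hc
  have hhx : P g x + ρ < c * x := by
    have h1 : xi g ρ x < c := lt_of_lt_of_le hxz hcon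
    rw [xi, div_lt_iff₀ hx] at h1
    linarith
  have hhz : P g z + ρ ≤ c * z := by
    have h1 : xi g ρ z ≤ c := hcon
    rw [xi, div_le_iff₀ hz] at h1
    linarith
  have hzx : 0 < z - x := by linarith
  set t := (z - y)/(z - x) with ht
  set s := (y - x)/(z - x) with hs
  have ht0 : 0 < t := div_pos (by linarith) hzx
  have hs0 : 0 < s := div_pos (by linarith) hzx
  have hts : t + s = 1 := by rw [ht, hs]; field_simp; ring
  have hcomb : t * x + s * z = y := by rw [ht, hs]; field_simp; ring
  have hconv : Real.exp y ≤ t * Real.exp x + s * Real.exp z := by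
    have h2 := convexOn_exp.2 (Set.mem_univ x) (Set.mem_univ z) ht0.le hs0.le hts
    simp only [smul_eq_mul] at h2
    rwa [hcomb] at h2
  have expand : t * ((Real.exp x - 1)/g + ρ) + s * ((Real.exp z - 1)/g + ρ)
      - ((Real.exp y - 1)/g + ρ)
      = (t * Real.exp x + s * Real.exp z - Real.exp y) * (1/g) + (t + s - 1) * (ρ - 1/g) := by
    field_simp
    ring
  rw [hts] at expand
  norm_num at expand
  have h1 : P g y + ρ ≤ t * (P g x + ρ) + s * (P g z + ρ) := by
    unfold P
    linarith [expand, mul_nonneg (by linarith : (0:ℝ) ≤ t * Real.exp x + s * Real.exp z - Real.exp y)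
      (inv_nonneg.mpr hg.le)]
  have hfin : c < c := by
    have hcy : t*(c*x) + s*(c*z) = c*y := by rw [← hcomb]; ring
    have h2 : P g y + ρ < c * y := by
      linarith [mul_lt_mul_of_pos_left hhx ht0, mul_le_mul_of_nonneg_left hhz hs0.le]
    have : xi g ρ y < c := by rw [xi, div_lt_iff₀ hy]; linarith
    exact this
  exact lt_irrefl c hfin

/-- Scheduling data: `N ≥ 1` epochs of positive lengths, arrival epoch indices
`0 = α_0 < α_1 < ⋯ < α_A = N` with positive arrival amounts `a_0, …, a_{A-1}` and `a_A = 0`,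
deadline epoch indices `0 < δ_1 < ⋯ < δ_D = N` with positive demands `d_1, …, d_D`. -/
def SchedData (N A D : ℕ) (L : ℕ → ℝ) (α : ℕ → ℕ) (a : ℕ → ℝ)
    (δ : ℕ → ℕ) (d : ℕ → ℝ) : Prop :=
  1 ≤ N ∧ (∀ n ∈ Finset.Icc 1 N, 0 < L n) ∧
  α 0 = 0 ∧ α A = N ∧ (∀ i < A, α i < α (i + 1)) ∧
  (∀ i < A, 0 < a i) ∧ a A = 0 ∧
  0 < δ 1 ∧ δ D = N ∧ (∀ j, 1 ≤ j → j < D → δ j < δ (j + 1)) ∧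
  (∀ j ∈ Finset.Icc 1 D, 0 < d j)

/-- Feasibility of a schedule `(r, l)`: box constraints, causality constraints and
deadline constraints. -/
def Feasible (N A D : ℕ) (L : ℕ → ℝ) (α : ℕ → ℕ) (a : ℕ → ℝ)
    (δ : ℕ → ℕ) (d : ℕ → ℝ) (r l : ℕ → ℝ) : Prop :=
  (∀ n ∈ Finset.Icc 1 N, 0 ≤ r n ∧ 0 ≤ l n ∧ l n ≤ L n) ∧
  (∀ i ∈ Finset.Icc 1 A, ∑ n ∈ Finset.Icc 1 (α i), r n * l n ≤ ∑ k ∈ Finset.range i, a k) ∧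
  (∀ j ∈ Finset.Icc 1 D, ∑ k ∈ Finset.Icc 1 j, d k ≤ ∑ n ∈ Finset.Icc 1 (δ j), r n * l n)

/-- **Lemma 1** (optimal per-epoch structure, time-invariant channel).
If `(rs, ls)` is a global minimizer of the total energy over the feasible schedules,
then every epoch uses one of three strategies: "off" (`ls n = 0`), "on-off"
(`rs n = r_ee` and `0 < ls n ≤ L n`), or "on" (`rs n > r_ee` and `ls n = L n`).
Equivalently: whenever `ls n > 0` one has `rs n ≥ r_ee`, and whenever moreover
`rs n > r_ee` one has `ls n = L n`. -/
theorem lemma1_time_invariant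
    (g ρ ree : ℝ) (hg : 0 < g) (hρ : 0 < ρ)
    (hree_pos : 0 < ree)
    (hree_min : ∀ r : ℝ, 0 < r → r ≠ ree → xi g ρ ree < xi g ρ r)
    (N A D : ℕ) (L : ℕ → ℝ) (α : ℕ → ℕ) (a : ℕ → ℝ) (δ : ℕ → ℕ) (d : ℕ → ℝ)
    (hdata : SchedData N A D L α a δ d)
    (rs ls : ℕ → ℝ)
    (hfeas : Feasible N A D L α a δ d rs ls)
    (hopt : ∀ r l : ℕ → ℝ, Feasible N A D L α a δ d r l →
      ∑ n ∈ Finset.Icc 1 N, (P g (rs n) + ρ) * ls n ≤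
        ∑ n ∈ Finset.Icc 1 N, (P g (r n) + ρ) * l n) :
    ∀ n ∈ Finset.Icc 1 N,
      (ls n = 0 ∨ (rs n = ree ∧ 0 < ls n ∧ ls n ≤ L n) ∨ (ree < rs n ∧ ls n = L n)) ∧
      (0 < ls n → ree ≤ rs n) ∧
      (0 < ls n → ree < rs n → ls n = L n) := by
  intro n hn
  obtain ⟨hbox, hcaus, hdl⟩ := hfeas
  have hb := hbox n hn
  have hLn : 0 < L n := hdata.2.1 n hn
  -- perturbation principle: replacing (rs n, ls n) by any (r', l') with the same
  -- rate×time product and respecting the box constraints cannot decrease energy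
  have perturb : ∀ r' l' : ℝ, 0 ≤ r' → 0 ≤ l' → l' ≤ L n → r' * l' = rs n * ls n →
      (P g (rs n) + ρ) * ls n ≤ (P g r' + ρ) * l' := by
    intro r' l' hr' hl'0 hl'L hprod
    set R := Function.update rs n r' with hR
    set Ll := Function.update ls n l' with hLl
    have hpt : ∀ m, R m * Ll m = rs m * ls m := by
      intro m
      by_cases hm : m = n
      · subst hm; simp only [hR, hLl, Function.update_self]; exact hprod
      · simp [hR, hLl, Function.update_of_ne hm]
    have hfeas' : Feasible N A D L α a δ d R Ll := by
      refine ⟨?_, ?_, ?_⟩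
      · intro m hm
        by_cases hmn : m = n
        · subst hmn
          simp only [hR, hLl, Function.update_self]
          exact ⟨hr', hl'0, hl'L⟩
        · simp only [hR, hLl, Function.update_of_ne hmn]
          exact hbox m hm
      · intro i hi
        calc ∑ m ∈ Finset.Icc 1 (α i), R m * Ll m
            = ∑ m ∈ Finset.Icc 1 (α i), rs m * ls m :=
              Finset.sum_congr rfl (fun m _ => hpt m)
          _ ≤ _ := hcaus i hi
      · intro j hj
        refine le_trans (hdl j hj) (le_of_eq ?_)
        exact (Finset.sum_congr rfl (fun m _ => hpt m)).symm
    have hkey := hopt R Ll hfeas'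
    have split1 : ∑ m ∈ Finset.Icc 1 N, (P g (rs m) + ρ) * ls m
        = (P g (rs n) + ρ) * ls n + ∑ m ∈ (Finset.Icc 1 N).erase n, (P g (rs m) + ρ) * ls m :=
      (Finset.add_sum_erase _ _ hn).symm
    have split2 : ∑ m ∈ Finset.Icc 1 N, (P g (R m) + ρ) * Ll m
        = (P g (R n) + ρ) * Ll n + ∑ m ∈ (Finset.Icc 1 N).erase n, (P g (R m) + ρ) * Ll m :=
      (Finset.add_sum_erase _ _ hn).symm
    have heq : ∑ m ∈ (Finset.Icc 1 N).erase n, (P g (R m) + ρ) * Ll m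
        = ∑ m ∈ (Finset.Icc 1 N).erase n, (P g (rs m) + ρ) * ls m := by
      refine Finset.sum_congr rfl (fun m hm => ?_)
      have hmn : m ≠ n := Finset.ne_of_mem_erase hm
      simp [hR, hLl, Function.update_of_ne hmn]
    have hRn : R n = r' := Function.update_self _ _ _
    have hLln : Ll n = l' := Function.update_self _ _ _
    rw [split1, split2, heq, hRn, hLln] at hkey
    linarith
  -- Claim 1: positive time forces rate ≥ ree
  have claim1 : 0 < ls n → ree ≤ rs n := by
    intro hls
    by_contra hlt
    push_neg at hlt
    rcases eq_or_lt_of_le hb.1 with h0 | h0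
    · -- rs n = 0 : turn the epoch off, saving circuit power
      have hp := perturb 0 0 le_rfl le_rfl hLn.le (by rw [← h0]; ring)
      have hP0 : P g (rs n) = 0 := by rw [← h0]; simp [P]
      rw [hP0] at hp
      simp [P] at hp
      nlinarith
    · -- 0 < rs n < ree : transmit at ree for a shorter time
      set l' := rs n * ls n / ree with hl'
      have hl'0 : 0 < l' := div_pos (mul_pos h0 hls) hree_pos
      have hl'le : l' ≤ ls n := by
        rw [hl', div_le_iff₀ hree_pos]; nlinarith
      have hp := perturb ree l' hree_pos.le hl'0.le (hl'le.trans hb.2.2)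
        (by rw [hl']; field_simp)
      have hxi := hree_min (rs n) h0 (ne_of_lt hlt)
      rw [xi, xi, div_lt_div_iff₀ hree_pos h0] at hxi
      have h2 : ((P g ree + ρ) * rs n) * (ls n / ree) < ((P g (rs n) + ρ) * ree) * (ls n / ree) :=
        mul_lt_mul_of_pos_right hxi (div_pos hls hree_pos)
      have h3 : (P g ree + ρ) * l' < (P g (rs n) + ρ) * ls n := by
        calc (P g ree + ρ) * l' = ((P g ree + ρ) * rs n) * (ls n / ree) := by
              rw [hl']; ring
          _ < ((P g (rs n) + ρ) * ree) * (ls n / ree) := h2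
          _ = (P g (rs n) + ρ) * ls n := by field_simp
      linarith
  -- Claim 2: positive time and rate > ree force full epoch usage
  have claim2 : 0 < ls n → ree < rs n → ls n = L n := by
    intro hls hrgt
    by_contra hne
    have hlsL : ls n < L n := lt_of_le_of_ne hb.2.2 hne
    have hrs0 : 0 < rs n := hree_pos.trans hrgt
    have hbpos : 0 < rs n * ls n := mul_pos hrs0 hls
    by_cases hcase : rs n * ls n / ree ≤ L n
    · -- can decelerate all the way to ree
      set l' := rs n * ls n / ree with hl'
      have hl'0 : 0 < l' := div_pos hbpos hree_pos
      have hp := perturb ree l' hree_pos.le hl'0.le hcase (by rw [hl']; field_simp)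
      have hxi := hree_min (rs n) hrs0 hrgt.ne'
      rw [xi, xi, div_lt_div_iff₀ hree_pos hrs0] at hxi
      have h2 : ((P g ree + ρ) * rs n) * (ls n / ree) < ((P g (rs n) + ρ) * ree) * (ls n / ree) :=
        mul_lt_mul_of_pos_right hxi (div_pos hls hree_pos)
      have h3 : (P g ree + ρ) * l' < (P g (rs n) + ρ) * ls n := by
        calc (P g ree + ρ) * l' = ((P g ree + ρ) * rs n) * (ls n / ree) := by
              rw [hl']; ring
          _ < ((P g (rs n) + ρ) * ree) * (ls n / ree) := h2
          _ = (P g (rs n) + ρ) * ls n := by field_simp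
      linarith
    · -- decelerate to r' > ree using the whole epoch
      push_neg at hcase
      set r' := rs n * ls n / L n with hr'
      have hr'lt : r' < rs n := by
        rw [hr', div_lt_iff₀ hLn]; nlinarith
      have hr'gt : ree < r' := by
        rw [hr', lt_div_iff₀ hLn]
        have := (lt_div_iff₀ hree_pos).mp hcase
        nlinarith
      have hr'0 : 0 < r' := hree_pos.trans hr'gt
      have hp := perturb r' (L n) hr'0.le hLn.le le_rfl (by rw [hr']; field_simp)
      have hxz : xi g ρ ree < xi g ρ (rs n) := hree_min _ hrs0 hrgt.ne'
      have hxy : xi g ρ r' < xi g ρ (rs n) :=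
        xi_mono_aux g ρ hg ree r' (rs n) hree_pos hr'gt hr'lt hxz
      rw [xi, xi, div_lt_div_iff₀ hr'0 hrs0] at hxy
      have h2 : ((P g r' + ρ) * rs n) * (ls n / r') < ((P g (rs n) + ρ) * r') * (ls n / r') :=
        mul_lt_mul_of_pos_right hxy (div_pos hls hr'0)
      have hLeq : L n = rs n * ls n / r' := by
        rw [hr']; field_simp
      have h3 : (P g r' + ρ) * L n < (P g (rs n) + ρ) * ls n := by
        calc (P g r' + ρ) * L n = ((P g r' + ρ) * rs n) * (ls n / r') := by
              rw [hLeq]; ring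
          _ < ((P g (rs n) + ρ) * r') * (ls n / r') := h2
          _ = (P g (rs n) + ρ) * ls n := by field_simp
      linarith
  refine ⟨?_, claim1, claim2⟩
  rcases eq_or_lt_of_le hb.2.1 with h0 | h0
  · exact Or.inl h0.symm
  · rcases eq_or_lt_of_le (claim1 h0) with he | he
    · exact Or.inr (Or.inl ⟨he.symm, h0, hb.2.2⟩)
    · exact Or.inr (Or.inr ⟨he, claim2 h0 he⟩)
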